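/- In the 3-strand configuration graph of Θ_m: (1) every vertex of the form {i,j,k} with i,j,k three distinct numbered vertices has degree exactly 6; (2) every vertex of the form {a,b,i} has degree exactly 2(m−1); (3) every vertex of the form {a,i,j} (i ≠ j numbered) has degree exactly m. -/

import Mathlib

/-- The subdivided generalized theta graph `Θ_m`: vertices `inl i` (the numbered
vertices `1,…,m`) and `inr 0 = a`, `inr 1 = b`; edges exactly `inl i — inr t`. -/
def theta (m : ℕ) : SimpleGraph (Fin m ⊕ Fin 2) where
  Adj x y := x.isLeft ≠ y.isLeft
  symm := ⟨fun _ _ h => h.symm⟩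
  loopless := ⟨fun _ h => h rfl⟩

instance (m : ℕ) : DecidableRel (theta m).Adj :=
  fun x y => inferInstanceAs (Decidable (x.isLeft ≠ y.isLeft))

/-- The 3-strand configuration graph of a graph `G`: vertices are 3-element
subsets of the vertex set; `S` is adjacent to `T` iff `|S ∩ T| = 2` and the
unique vertex of `S \ T` is adjacent in `G` to the unique vertex of `T \ S`. -/
def conf3 {V : Type*} [DecidableEq V] (G : SimpleGraph V) :
    SimpleGraph {S : Finset V // S.card = 3} where
  Adj S T := (S.1 ∩ T.1).card = 2 ∧
    ∃ u v, u ∈ S.1 \ T.1 ∧ v ∈ T.1 \ S.1 ∧ G.Adj u v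
  symm := by
    constructor
    rintro S T ⟨hc, u, v, hu, hv, ha⟩
    exact ⟨by rwa [Finset.inter_comm], v, u, hv, hu, ha.symm⟩
  loopless := by
    constructor
    rintro S ⟨hc, u, v, hu, _⟩
    simp at hu

instance {V : Type*} [DecidableEq V] [Fintype V] (G : SimpleGraph V)
    [DecidableRel G.Adj] : DecidableRel (conf3 G).Adj :=
  fun _ _ => inferInstanceAs (Decidable (_ ∧ _))

lemma conf3_degree_eq {V : Type*} [DecidableEq V] [Fintype V] (G : SimpleGraph V)
    [DecidableRel G.Adj] (S : Finset V) (hS : S.card = 3) :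
    (conf3 G).degree ⟨S, hS⟩ = ((S ×ˢ Sᶜ).filter fun p => G.Adj p.1 p.2).card := by
  rw [← SimpleGraph.card_neighborFinset_eq_degree]
  symm
  apply Finset.card_bij (fun p _ => (⟨insert p.2 (S.erase p.1), by
      rcases Finset.mem_filter.mp ‹_› with ⟨hp, _⟩
      rcases Finset.mem_product.mp hp with ⟨hu, hv⟩
      rw [Finset.card_insert_of_notMem, Finset.card_erase_of_mem hu, hS]
      intro h; exact (Finset.mem_compl.mp hv) (Finset.mem_of_mem_erase h)⟩ :
      {S : Finset V // S.card = 3}))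
  · rintro ⟨u, v⟩ hp
    rcases Finset.mem_filter.mp hp with ⟨hp', hadj⟩
    rcases Finset.mem_product.mp hp' with ⟨hu, hv⟩
    have hvS : v ∉ S := Finset.mem_compl.mp hv
    rw [SimpleGraph.mem_neighborFinset]
    refine ⟨?_, u, v, ?_, ?_, hadj⟩
    · have : S ∩ insert v (S.erase u) = S.erase u := by
        ext x
        simp only [Finset.mem_inter, Finset.mem_insert, Finset.mem_erase]
        constructor
        · rintro ⟨hx, rfl | hx'⟩
          · exact absurd hx hvS
          · exact hx'
        · rintro ⟨hne, hx⟩; exact ⟨hx, Or.inr ⟨hne, hx⟩⟩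
      rw [this, Finset.card_erase_of_mem hu, hS]
    · simp only [Finset.mem_sdiff, Finset.mem_insert, Finset.mem_erase]
      refine ⟨hu, ?_⟩
      rintro (rfl | ⟨h, _⟩)
      · exact hvS hu
      · exact h rfl
    · exact Finset.mem_sdiff.mpr ⟨Finset.mem_insert_self v _, hvS⟩
  · rintro ⟨u, v⟩ hp ⟨u', v'⟩ hp' heq
    rcases Finset.mem_filter.mp hp with ⟨hq, _⟩
    rcases Finset.mem_product.mp hq with ⟨hu, hv⟩
    rcases Finset.mem_filter.mp hp' with ⟨hq', _⟩
    rcases Finset.mem_product.mp hq' with ⟨hu', hv'⟩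
    have hvS : v ∉ S := Finset.mem_compl.mp hv
    have hv'S : v' ∉ S := Finset.mem_compl.mp hv'
    have heq' : insert v (S.erase u) = insert v' (S.erase u') := congrArg Subtype.val heq
    have hvv : v = v' := by
      have : v ∈ insert v' (S.erase u') := heq' ▸ Finset.mem_insert_self v _
      rcases Finset.mem_insert.mp this with h | h
      · exact h
      · exact absurd (Finset.mem_of_mem_erase h) hvS
    have huu : u = u' := by
      by_contra h
      have : u ∈ insert v' (S.erase u') :=
        Finset.mem_insert_of_mem (Finset.mem_erase.mpr ⟨h, hu⟩)
      rw [← heq'] at this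
      rcases Finset.mem_insert.mp this with h' | h'
      · exact hvS (h' ▸ hu)
      · exact (Finset.mem_erase.mp h').1 rfl
    simp [hvv, huu]
  · intro T hT
    rw [SimpleGraph.mem_neighborFinset] at hT
    rcases hT with ⟨hc, u, v, hu, hv, hadj⟩
    rcases Finset.mem_sdiff.mp hu with ⟨huS, huT⟩
    rcases Finset.mem_sdiff.mp hv with ⟨hvT, hvS⟩
    refine ⟨(u, v), Finset.mem_filter.mpr ⟨Finset.mem_product.mpr
      ⟨huS, Finset.mem_compl.mpr hvS⟩, hadj⟩, ?_⟩
    apply Subtype.ext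
    have hTS : (T.1 \ S).card = 1 := by
      have := Finset.card_sdiff_add_card_inter T.1 S
      rw [Finset.inter_comm] at this
      have hc' : (S ∩ (T : Finset V)).card = 2 := hc
      have h3 : (T : Finset V).card = 3 := T.2
      omega
    have hTsub : T.1 ⊆ insert v (S.erase u) := by
      intro x hx
      by_cases hxv : x = v
      · simp [hxv]
      · have hxS : x ∈ S := by
          by_contra hxS
          have hx1 : x ∈ T.1 \ S := Finset.mem_sdiff.mpr ⟨hx, hxS⟩
          have := Finset.card_eq_one.mp hTS
          rcases this with ⟨w, hw⟩
          rw [hw] at hx1 hv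
          simp at hx1 hv
          exact hxv (hx1.trans hv.symm)
        refine Finset.mem_insert_of_mem (Finset.mem_erase.mpr ⟨?_, hxS⟩)
        rintro rfl; exact huT hx
    symm
    apply Finset.eq_of_subset_of_card_le hTsub
    rw [T.2, Finset.card_insert_of_notMem, Finset.card_erase_of_mem huS, hS]
    intro h; exact hvS (Finset.mem_of_mem_erase h)

/-- Degrees in the 3-strand configuration graph of `Θ_m` (`a = inr 0`,
`b = inr 1`): a vertex `{i,j,k}` has degree 6, a vertex `{a,b,i}` has degree
`2(m-1)`, and a vertex `{a,i,j}` has degree `m`. -/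
theorem conf3_theta_degrees (m : ℕ) (hm : 3 ≤ m) :
    (∀ i j k : Fin m, ∀ hij : i ≠ j, ∀ hik : i ≠ k, ∀ hjk : j ≠ k,
      (conf3 (theta m)).degree
        ⟨{Sum.inl i, Sum.inl j, Sum.inl k},
          Finset.card_eq_three.mpr ⟨_, _, _, by simp [hij], by simp [hik], by simp [hjk], rfl⟩⟩
        = 6) ∧
    (∀ i : Fin m,
      (conf3 (theta m)).degree
        ⟨{Sum.inr 0, Sum.inr 1, Sum.inl i},
          Finset.card_eq_three.mpr ⟨_, _, _, by simp, by simp, by simp, rfl⟩⟩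
        = 2 * (m - 1)) ∧
    (∀ i j : Fin m, ∀ hij : i ≠ j,
      (conf3 (theta m)).degree
        ⟨{Sum.inr 0, Sum.inl i, Sum.inl j},
          Finset.card_eq_three.mpr ⟨_, _, _, by simp, by simp, by simp [hij], rfl⟩⟩
        = m) := by
  refine ⟨?_, ?_, ?_⟩
  · intro i j k hij hik hjk
    rw [conf3_degree_eq]
    have : ((({Sum.inl i, Sum.inl j, Sum.inl k} : Finset (Fin m ⊕ Fin 2)) ×ˢ ({Sum.inl i, Sum.inl j, Sum.inl k} : Finset (Fin m ⊕ Fin 2))ᶜ).filter fun p => (theta m).Adj p.1 p.2)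
        = ({Sum.inl i, Sum.inl j, Sum.inl k} : Finset (Fin m ⊕ Fin 2)) ×ˢ ({Sum.inr 0, Sum.inr 1} : Finset (Fin m ⊕ Fin 2)) := by
      ext ⟨u, v⟩
      rcases u with x | t <;> rcases v with y | s <;>
        simp [theta, Finset.mem_filter, Finset.mem_product]
      all_goals intro; omega
    rw [this, Finset.card_product,
        Finset.card_insert_of_notMem (by simp [hij, hik]),
        Finset.card_insert_of_notMem (by simp [hjk]), Finset.card_singleton,
        Finset.card_insert_of_notMem (by simp), Finset.card_singleton]
  · intro i
    rw [conf3_degree_eq]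
    have : ((({Sum.inr 0, Sum.inr 1, Sum.inl i} : Finset (Fin m ⊕ Fin 2)) ×ˢ ({Sum.inr 0, Sum.inr 1, Sum.inl i} : Finset (Fin m ⊕ Fin 2))ᶜ).filter fun p => (theta m).Adj p.1 p.2)
        = ({Sum.inr 0, Sum.inr 1} : Finset (Fin m ⊕ Fin 2)) ×ˢ ((Finset.univ.image Sum.inl).erase (Sum.inl i)) := by
      ext ⟨u, v⟩
      rcases u with x | t <;> rcases v with y | s <;>
        simp [theta, Finset.mem_filter, Finset.mem_product]
      all_goals intros; omega
    rw [this, Finset.card_product, Finset.card_erase_of_mem (by simp),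
      Finset.card_image_of_injective _ Sum.inl_injective, Finset.card_univ, Fintype.card_fin,
      Finset.card_insert_of_notMem (by simp), Finset.card_singleton]
  · intro i j hij
    rw [conf3_degree_eq]
    have : ((({Sum.inr 0, Sum.inl i, Sum.inl j} : Finset (Fin m ⊕ Fin 2)) ×ˢ ({Sum.inr 0, Sum.inl i, Sum.inl j} : Finset (Fin m ⊕ Fin 2))ᶜ).filter fun p => (theta m).Adj p.1 p.2)
        = ({(Sum.inr 0 : Fin m ⊕ Fin 2)} : Finset (Fin m ⊕ Fin 2)) ×ˢ (((Finset.univ.image Sum.inl).erase (Sum.inl i)).erase (Sum.inl j))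
          ∪ ({Sum.inl i, Sum.inl j} : Finset (Fin m ⊕ Fin 2)) ×ˢ ({Sum.inr 1} : Finset (Fin m ⊕ Fin 2)) := by
      ext ⟨u, v⟩
      rcases u with x | t <;> rcases v with y | s <;>
        simp [theta, Finset.mem_filter, Finset.mem_product, Finset.mem_union]
      all_goals intros; omega
    rw [this, Finset.card_union_of_disjoint
        (by simp [Finset.disjoint_left, Finset.mem_product]),
      Finset.card_product, Finset.card_product,
      Finset.card_erase_of_mem (Finset.mem_erase.mpr ⟨by simp [Ne.symm hij], by simp⟩),
      Finset.card_erase_of_mem (by simp),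
      Finset.card_image_of_injective _ Sum.inl_injective, Finset.card_univ, Fintype.card_fin,
      Finset.card_singleton, Finset.card_singleton,
      Finset.card_insert_of_notMem (by simp [hij]), Finset.card_singleton]
    omega
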